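/- (Corollary 1) Let u₁, u₂ ∈ ℝ³ be unit vectors and let v₁, v₂ ∈ ℝ³ be orthonormal vectors. Let O := (1/√2)((u₁·σ) ⊗ (v₁·σ) + (u₂·σ) ⊗ (v₂·σ)). Then for every unit vector ψ ∈ ℂ^(Fin 2 × Fin 2), |⟨ψ, Oψ⟩| ≤ √2; moreover, there exists a unit vector ψ with |⟨ψ, Oψ⟩| = √2 if and only if u₁ ⬝ u₂ = 0. -/

import Mathlib

open Matrix Kronecker Complex

/-- The Pauli matrix σ₁. -/
noncomputable def σ1 : Matrix (Fin 2) (Fin 2) ℂ := !![0, 1; 1, 0]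

/-- The Pauli matrix σ₂. -/
noncomputable def σ2 : Matrix (Fin 2) (Fin 2) ℂ := !![0, -Complex.I; Complex.I, 0]

/-- The Pauli matrix σ₃. -/
noncomputable def σ3 : Matrix (Fin 2) (Fin 2) ℂ := !![1, 0; 0, -1]

/-- For `a ∈ ℝ³`, the observable `a·σ = a₁σ₁ + a₂σ₂ + a₃σ₃`. -/
noncomputable def pauliDot (a : Fin 3 → ℝ) : Matrix (Fin 2) (Fin 2) ℂ :=
  (a 0 : ℂ) • σ1 + (a 1 : ℂ) • σ2 + (a 2 : ℂ) • σ3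

def pcross (a b : Fin 3 → ℝ) : Fin 3 → ℝ :=
  ![a 1 * b 2 - a 2 * b 1, a 2 * b 0 - a 0 * b 2, a 0 * b 1 - a 1 * b 0]

lemma pauli_mul (a b : Fin 3 → ℝ) :
    pauliDot a * pauliDot b =
      ((a ⬝ᵥ b : ℝ) : ℂ) • (1 : Matrix (Fin 2) (Fin 2) ℂ) + Complex.I • pauliDot (pcross a b) := by
  ext i j
  fin_cases i <;> fin_cases j <;>
    simp [pauliDot, pcross, σ1, σ2, σ3, dotProduct, Fin.sum_univ_three, mul_apply,
      Fin.sum_univ_two, Matrix.one_apply] <;> ring_nf <;> simp [Complex.I_sq] <;> ring_nf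

lemma pcross_self (a : Fin 3 → ℝ) : pcross a a = 0 := by
  funext i; fin_cases i <;> simp [pcross] <;> ring

lemma pcross_anticomm (a b : Fin 3 → ℝ) : pcross b a = -pcross a b := by
  funext i; fin_cases i <;> simp [pcross] <;> ring

lemma pauliDot_zero : pauliDot 0 = 0 := by
  simp [pauliDot]

lemma pauliDot_neg (a : Fin 3 → ℝ) : pauliDot (-a) = -pauliDot a := by
  simp [pauliDot]; module

lemma pauliDot_herm (a : Fin 3 → ℝ) : (pauliDot a)ᴴ = pauliDot a := by
  ext i j
  fin_cases i <;> fin_cases j <;>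
    simp [pauliDot, σ1, σ2, σ3, conjTranspose_apply]

lemma pauliDot_trace (a : Fin 3 → ℝ) : (pauliDot a).trace = 0 := by
  simp [pauliDot, trace, σ1, σ2, σ3, Fin.sum_univ_two, diag]

lemma pcross_dot (a b : Fin 3 → ℝ) :
    pcross a b ⬝ᵥ pcross a b = (a ⬝ᵥ a) * (b ⬝ᵥ b) - (a ⬝ᵥ b) ^ 2 := by
  simp [pcross, dotProduct, Fin.sum_univ_three]; ring

lemma pauli_sq (a : Fin 3 → ℝ) (ha : a ⬝ᵥ a = 1) :
    pauliDot a * pauliDot a = 1 := by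
  rw [pauli_mul, ha, pcross_self, pauliDot_zero]; simp

lemma kron_conjTranspose (A B : Matrix (Fin 2) (Fin 2) ℂ) :
    (A ⊗ₖ B)ᴴ = Aᴴ ⊗ₖ Bᴴ := by
  ext ⟨i1, i2⟩ ⟨j1, j2⟩
  simp [conjTranspose_apply, kroneckerMap_apply, mul_comm]

lemma S_sq (u₁ u₂ v₁ v₂ : Fin 3 → ℝ)
    (hu₁ : u₁ ⬝ᵥ u₁ = 1) (hu₂ : u₂ ⬝ᵥ u₂ = 1) (hv₁ : v₁ ⬝ᵥ v₁ = 1) (hv₂ : v₂ ⬝ᵥ v₂ = 1)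
    (hv₁₂ : v₁ ⬝ᵥ v₂ = 0) :
    (pauliDot u₁ ⊗ₖ pauliDot v₁ + pauliDot u₂ ⊗ₖ pauliDot v₂) *
      (pauliDot u₁ ⊗ₖ pauliDot v₁ + pauliDot u₂ ⊗ₖ pauliDot v₂) =
    (2 : ℂ) • 1 - (2 : ℂ) • (pauliDot (pcross u₁ u₂) ⊗ₖ pauliDot (pcross v₁ v₂)) := by
  have hv₂₁ : v₂ ⬝ᵥ v₁ = 0 := by rwa [dotProduct_comm]
  rw [add_mul, mul_add, mul_add, ← mul_kronecker_mul, ← mul_kronecker_mul, ← mul_kronecker_mul,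
    ← mul_kronecker_mul, pauli_sq u₁ hu₁, pauli_sq u₂ hu₂, pauli_sq v₁ hv₁, pauli_sq v₂ hv₂,
    pauli_mul u₁ u₂, pauli_mul u₂ u₁, pauli_mul v₁ v₂, pauli_mul v₂ v₁,
    hv₁₂, hv₂₁, pcross_anticomm u₁ u₂, pcross_anticomm v₁ v₂, pauliDot_neg, pauliDot_neg]
  simp only [Complex.ofReal_zero, zero_smul, zero_add, one_kronecker_one,
    Matrix.add_kronecker, Matrix.kronecker_add, Matrix.smul_kronecker, Matrix.kronecker_smul,
    smul_neg, neg_neg, smul_smul]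
  simp only [← neg_smul, Matrix.smul_kronecker, Matrix.kronecker_smul, smul_smul,
    dotProduct_comm u₂ u₁]
  match_scalars <;> simp [Complex.I_sq] <;> ring

lemma dot_abs_le (x y : (Fin 2 × Fin 2) → ℂ) :
    ‖star x ⬝ᵥ y‖ ≤
      Real.sqrt (star x ⬝ᵥ x).re * Real.sqrt (star y ⬝ᵥ y).re := by
  have h := norm_inner_le_norm (𝕜 := ℂ)
    (WithLp.toLp 2 x) (WithLp.toLp 2 y)
  rw [norm_eq_sqrt_re_inner (𝕜 := ℂ) (WithLp.toLp 2 x),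
    norm_eq_sqrt_re_inner (𝕜 := ℂ) (WithLp.toLp 2 y),
    EuclideanSpace.inner_toLp_toLp, EuclideanSpace.inner_toLp_toLp,
    EuclideanSpace.inner_toLp_toLp, dotProduct_comm y (star x), dotProduct_comm x (star x),
    dotProduct_comm y (star y)] at h
  exact h

lemma dot_star_self (v : (Fin 2 × Fin 2) → ℂ) :
    star v ⬝ᵥ v = ((∑ i, Complex.normSq (v i) : ℝ) : ℂ) := by
  simp [dotProduct, Complex.normSq_eq_conj_mul_self]

lemma star_mulVec_dot (M N : Matrix (Fin 2 × Fin 2) (Fin 2 × Fin 2) ℂ)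
    (x : (Fin 2 × Fin 2) → ℂ) :
    star (M.mulVec x) ⬝ᵥ N.mulVec x = star x ⬝ᵥ (Mᴴ * N).mulVec x := by
  rw [star_mulVec, dotProduct_mulVec, vecMul_vecMul, ← dotProduct_mulVec]

lemma herm_dot_real (M : Matrix (Fin 2 × Fin 2) (Fin 2 × Fin 2) ℂ) (hM : Mᴴ = M)
    (x : (Fin 2 × Fin 2) → ℂ) :
    star (star x ⬝ᵥ M.mulVec x) = star x ⬝ᵥ M.mulVec x := by
  conv_lhs => rw [star_dotProduct]
  rw [star_star, star_mulVec, dotProduct_mulVec, hM, ← dotProduct_mulVec]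

lemma herm_dot_re (M : Matrix (Fin 2 × Fin 2) (Fin 2 × Fin 2) ℂ) (hM : Mᴴ = M)
    (x : (Fin 2 × Fin 2) → ℂ) :
    (((star x ⬝ᵥ M.mulVec x).re : ℝ) : ℂ) = star x ⬝ᵥ M.mulVec x := by
  have h := herm_dot_real M hM x
  rw [Complex.star_def, Complex.conj_eq_iff_re] at h
  exact h

/-- Corollary 1: for unit vectors `u₁, u₂` and orthonormal `v₁, v₂`, every two-qubit pure state
satisfies `|⟨ψ, Oψ⟩| ≤ √2`, and the bound `√2` is attained by some state iff `u₁ ⬝ u₂ = 0`. -/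
theorem steering_max_violation_sqrt_two (u₁ u₂ v₁ v₂ : Fin 3 → ℝ)
    (hu₁ : u₁ ⬝ᵥ u₁ = 1) (hu₂ : u₂ ⬝ᵥ u₂ = 1) (hv₁ : v₁ ⬝ᵥ v₁ = 1) (hv₂ : v₂ ⬝ᵥ v₂ = 1)
    (hv₁₂ : v₁ ⬝ᵥ v₂ = 0)
    (O : Matrix (Fin 2 × Fin 2) (Fin 2 × Fin 2) ℂ)
    (hO : O = ((1 / Real.sqrt 2 : ℝ) : ℂ) •
      (pauliDot u₁ ⊗ₖ pauliDot v₁ + pauliDot u₂ ⊗ₖ pauliDot v₂)) :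
    (∀ ψ : (Fin 2 × Fin 2) → ℂ, star ψ ⬝ᵥ ψ = 1 →
        ‖star ψ ⬝ᵥ O.mulVec ψ‖ ≤ Real.sqrt 2) ∧
      ((∃ ψ : (Fin 2 × Fin 2) → ℂ, star ψ ⬝ᵥ ψ = 1 ∧
          ‖star ψ ⬝ᵥ O.mulVec ψ‖ = Real.sqrt 2) ↔ u₁ ⬝ᵥ u₂ = 0) := by
  set c : ℝ := u₁ ⬝ᵥ u₂ with hc
  set T : Matrix (Fin 2 × Fin 2) (Fin 2 × Fin 2) ℂ :=
    pauliDot (pcross u₁ u₂) ⊗ₖ pauliDot (pcross v₁ v₂) with hT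
  -- basic scalar facts
  have hγ : ((1 / Real.sqrt 2 : ℝ) : ℂ) * ((1 / Real.sqrt 2 : ℝ) : ℂ) = ((1/2 : ℝ) : ℂ) := by
    rw [← Complex.ofReal_mul, div_mul_div_comm, one_mul, Real.mul_self_sqrt] <;> norm_num
  have hWW : pcross u₁ u₂ ⬝ᵥ pcross u₁ u₂ = 1 - c ^ 2 := by
    rw [pcross_dot, hu₁, hu₂, ← hc]; ring
  have hVV : pcross v₁ v₂ ⬝ᵥ pcross v₁ v₂ = 1 := by
    rw [pcross_dot, hv₁, hv₂, hv₁₂]; ring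
  have h1c : 0 ≤ 1 - c ^ 2 := by
    have h0 : (0:ℝ) ≤ pcross u₁ u₂ ⬝ᵥ pcross u₁ u₂ :=
      Finset.sum_nonneg fun i _ => mul_self_nonneg _
    rwa [hWW] at h0
  -- matrix identities
  have hOO : O * O = 1 - T := by
    rw [hO, smul_mul_smul_comm, hγ, S_sq u₁ u₂ v₁ v₂ hu₁ hu₂ hv₁ hv₂ hv₁₂, smul_sub,
      smul_smul, smul_smul, ← hT]
    norm_num
  have hTT : T * T = ((1 - c ^ 2 : ℝ) : ℂ) • 1 := by
    rw [hT, ← mul_kronecker_mul, pauli_mul, pauli_mul, pcross_self, pcross_self,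
      pauliDot_zero, hWW, hVV]
    simp [Matrix.smul_kronecker, Matrix.kronecker_smul, one_kronecker_one]
  have hTH : Tᴴ = T := by
    rw [hT, kron_conjTranspose, pauliDot_herm, pauliDot_herm]
  have hOH : Oᴴ = O := by
    rw [hO, conjTranspose_smul, conjTranspose_add, kron_conjTranspose, kron_conjTranspose,
      pauliDot_herm, pauliDot_herm, pauliDot_herm, pauliDot_herm, Complex.star_def,
      Complex.conj_ofReal]
  -- key bound
  have key : ∀ ψ : (Fin 2 × Fin 2) → ℂ, star ψ ⬝ᵥ ψ = 1 →
      ‖star ψ ⬝ᵥ O.mulVec ψ‖ ≤ Real.sqrt (1 + Real.sqrt (1 - c ^ 2)) := by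
    intro ψ hψ
    have hψre : (star ψ ⬝ᵥ ψ).re = 1 := by rw [hψ]; simp
    -- the T-expectation
    have hTsq : star (T.mulVec ψ) ⬝ᵥ T.mulVec ψ = ((1 - c ^ 2 : ℝ) : ℂ) := by
      rw [star_mulVec_dot, hTH, hTT, smul_mulVec, one_mulVec, dotProduct_smul, hψ,
        smul_eq_mul, mul_one]
    have htb : ‖star ψ ⬝ᵥ T.mulVec ψ‖ ≤ Real.sqrt (1 - c ^ 2) := by
      have h := dot_abs_le ψ (T.mulVec ψ)
      rw [hψre, hTsq] at h
      simpa [← Complex.ofReal_pow] using h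
    have hOsq : (star (O.mulVec ψ) ⬝ᵥ O.mulVec ψ).re ≤ 1 + Real.sqrt (1 - c ^ 2) := by
      rw [star_mulVec_dot, hOH, hOO, sub_mulVec, one_mulVec, dotProduct_sub, hψ]
      have : (1 - star ψ ⬝ᵥ T.mulVec ψ).re = 1 - (star ψ ⬝ᵥ T.mulVec ψ).re := by simp
      rw [this]
      have habs : |(star ψ ⬝ᵥ T.mulVec ψ).re| ≤ Real.sqrt (1 - c ^ 2) :=
        le_trans (Complex.abs_re_le_norm _) htb
      linarith [abs_le.mp habs]
    have h := dot_abs_le ψ (O.mulVec ψ)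
    rw [hψre, Real.sqrt_one, one_mul] at h
    exact le_trans h (Real.sqrt_le_sqrt hOsq)
  -- uniform bound by √2
  have hsq2 : Real.sqrt (1 + Real.sqrt (1 - c ^ 2)) ≤ Real.sqrt 2 := by
    apply Real.sqrt_le_sqrt
    have : Real.sqrt (1 - c ^ 2) ≤ 1 := Real.sqrt_le_one.mpr (by nlinarith [sq_nonneg c])
    linarith
  refine ⟨fun ψ hψ => le_trans (key ψ hψ) hsq2, ?_, ?_⟩
  · -- attained ⇒ c = 0
    rintro ⟨ψ, hψ, habs⟩
    have h := key ψ hψ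
    rw [habs] at h
    have h2 : (2:ℝ) ≤ 1 + Real.sqrt (1 - c ^ 2) :=
      (Real.sqrt_le_sqrt_iff (by positivity)).mp h
    have h3 : (1:ℝ) ≤ Real.sqrt (1 - c ^ 2) := by linarith
    have h4 : (1:ℝ) ≤ 1 - c ^ 2 := by
      nlinarith [Real.sq_sqrt h1c, Real.sqrt_nonneg (1 - c ^ 2)]
    have : c ^ 2 = 0 := by nlinarith [sq_nonneg c]
    exact pow_eq_zero_iff (by norm_num) |>.mp this
  · -- c = 0 ⇒ attained
    intro hc0
    have hTT1 : T * T = 1 := by rw [hTT, hc0]; norm_num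
    -- T ≠ 1 via trace
    have htrT : T.trace = 0 := by
      rw [hT, trace_kronecker, pauliDot_trace, pauliDot_trace, mul_zero]
    have hT1 : T ≠ 1 := by
      intro h
      rw [h, trace_one] at htrT
      simp at htrT
    have hQ : (1 : Matrix (Fin 2 × Fin 2) (Fin 2 × Fin 2) ℂ) - T ≠ 0 := by
      intro h
      exact hT1 (by rwa [sub_eq_zero, eq_comm] at h)
    -- find a nonzero column
    obtain ⟨i, j, hij⟩ : ∃ i j, ((1 : Matrix (Fin 2 × Fin 2) (Fin 2 × Fin 2) ℂ) - T) i j ≠ 0 := by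
      by_contra h
      push_neg at h
      exact hQ (Matrix.ext fun i j => h i j)
    set φ : (Fin 2 × Fin 2) → ℂ :=
      ((1 : Matrix (Fin 2 × Fin 2) (Fin 2 × Fin 2) ℂ) - T).mulVec (Pi.single j 1) with hφ
    have hφ0 : φ ≠ 0 := by
      intro h
      apply hij
      have := congr_fun h i
      simpa [hφ, mulVec_single] using this
    have hTφ : T.mulVec φ = -φ := by
      rw [hφ, mulVec_mulVec, mul_sub, mul_one, hTT1, ← neg_mulVec, neg_sub]
    have hOOφ : (O * O).mulVec φ = (2 : ℂ) • φ := by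
      rw [hOO, sub_mulVec, one_mulVec, hTφ, sub_neg_eq_add, two_smul]
    set μ₀ : ℂ := ((Real.sqrt 2 : ℝ) : ℂ) with hμ₀
    have hμμ : μ₀ * μ₀ = 2 := by
      rw [hμ₀, ← Complex.ofReal_mul, Real.mul_self_sqrt (by norm_num : (0:ℝ) ≤ 2)]
      norm_num
    set χ : (Fin 2 × Fin 2) → ℂ := O.mulVec φ + μ₀ • φ with hχdef
    have hOχ : O.mulVec χ = μ₀ • χ := by
      rw [hχdef, mulVec_add, mulVec_smul, mulVec_mulVec, hOOφ, smul_add, smul_smul, hμμ]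
      abel
    -- get an eigenvector
    obtain ⟨ξ, hξ0, μ, hμabs, hOξ⟩ :
        ∃ ξ : (Fin 2 × Fin 2) → ℂ, ξ ≠ 0 ∧ ∃ μ : ℂ, ‖μ‖ = Real.sqrt 2 ∧
          O.mulVec ξ = μ • ξ := by
      by_cases hχ : χ = 0
      · refine ⟨φ, hφ0, -μ₀, ?_, ?_⟩
        · rw [hμ₀]
          simp [Real.sqrt_nonneg]
        · have : O.mulVec φ = -(μ₀ • φ) := by
            rw [eq_neg_iff_add_eq_zero]
            exact hχdef ▸ hχ
          rw [this, neg_smul]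
      · refine ⟨χ, hχ, μ₀, ?_, hOχ⟩
        rw [hμ₀]
        simp [Real.sqrt_nonneg]
    -- normalize
    set s : ℝ := ∑ k, Complex.normSq (ξ k) with hs
    have hs0 : 0 < s := by
      rcases Function.ne_iff.mp hξ0 with ⟨k, hk⟩
      exact Finset.sum_pos' (fun _ _ => Complex.normSq_nonneg _)
        ⟨k, Finset.mem_univ k, by simpa [Complex.normSq_pos] using hk⟩
    set r : ℝ := Real.sqrt s with hr
    have hr0 : 0 < r := Real.sqrt_pos.mpr hs0
    have hrr : r * r = s := Real.mul_self_sqrt hs0.le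
    have hnorm : star (((r⁻¹ : ℝ) : ℂ) • ξ) ⬝ᵥ (((r⁻¹ : ℝ) : ℂ) • ξ) = 1 := by
      rw [star_smul, smul_dotProduct, dotProduct_smul, dot_star_self, ← hs, Complex.star_def,
        Complex.conj_ofReal, smul_eq_mul, smul_eq_mul, ← Complex.ofReal_mul,
        ← Complex.ofReal_mul]
      norm_cast
      field_simp
      nlinarith
    have hOψ : O.mulVec (((r⁻¹ : ℝ) : ℂ) • ξ) = μ • (((r⁻¹ : ℝ) : ℂ) • ξ) := by
      rw [mulVec_smul, hOξ, smul_comm]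
    refine ⟨((r⁻¹ : ℝ) : ℂ) • ξ, hnorm, ?_⟩
    rw [hOψ, dotProduct_smul, smul_eq_mul, hnorm, mul_one]
    exact hμabs
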